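/- Let f : K → ℝ be α-Hölder continuous and g : K → ℝ be β-Hölder continuous with 0 < α, β ≤ 1 and ∑_{s∈S} r_s^{α+β} < 1. Assume there exists M ∈ ℕ such that for all n ≥ M, all 𝐬 ∈ S^n and all l ∈ {0,…,N−2} one has g(b_{(𝐬,l)}) = g(a_{(𝐬,l+1)}) (i.e. g is constant on the endpoints of every hole of sufficiently deep level). Then the pair (f,g) is integrable on K, i.e. the sequence (φ_n(f,g))_n converges. -/
import Mathlib


open Filter Topology

/-- For a word `s = (s_1, …, s_n)` over the alphabet `Fin (N+1)`,
`wmap F s = F s_1 ∘ ⋯ ∘ F s_n`. -/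
noncomputable def wmap {N n : ℕ} (F : Fin (N + 1) → ℝ → ℝ) (s : Fin n → Fin (N + 1)) :
    ℝ → ℝ :=
  (List.ofFn s).foldr (fun i h => F i ∘ h) id

/-- `φ_n(f,g) = ∑_{s ∈ S^n} (f(a_s)+f(b_s))·(g(b_s)−g(a_s))`. -/
noncomputable def phiSeq {N : ℕ} (F : Fin (N + 1) → ℝ → ℝ) (a b : ℝ) (f g : ℝ → ℝ)
    (n : ℕ) : ℝ :=
  ∑ s : Fin n → Fin (N + 1),
    (f (wmap F s a) + f (wmap F s b)) * (g (wmap F s b) - g (wmap F s a))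

/-- The self-similar set `K = ⋂_{n ≥ 1} ⋃_{s ∈ S^n} f_s([a,b])`. -/
noncomputable def ssSet {N : ℕ} (F : Fin (N + 1) → ℝ → ℝ) (a b : ℝ) : Set ℝ :=
  ⋂ n : ℕ, ⋃ s : Fin (n + 1) → Fin (N + 1), wmap F s '' Set.Icc a b

noncomputable def Wl {N : ℕ} (F : Fin (N + 1) → ℝ → ℝ) (l : List (Fin (N + 1))) : ℝ → ℝ :=
  l.foldr (fun i h => F i ∘ h) id

lemma wmap_eq_Wl {N n : ℕ} (F : Fin (N + 1) → ℝ → ℝ) (s : Fin n → Fin (N + 1)) :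
    wmap F s = Wl F (List.ofFn s) := rfl

lemma Wl_cons {N : ℕ} (F : Fin (N + 1) → ℝ → ℝ) (i : Fin (N + 1)) (l : List (Fin (N + 1))) :
    Wl F (i :: l) = F i ∘ Wl F l := rfl

lemma Wl_append {N : ℕ} (F : Fin (N + 1) → ℝ → ℝ) (l₁ l₂ : List (Fin (N + 1))) :
    Wl F (l₁ ++ l₂) = Wl F l₁ ∘ Wl F l₂ := by
  induction l₁ with
  | nil => rfl
  | cons i l ih =>
    rw [List.cons_append, Wl_cons, Wl_cons, ih, Function.comp_assoc]

lemma ofFn_snoc'' {n : ℕ} {X : Type*} (s : Fin n → X) (t : X) :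
    List.ofFn (Fin.snoc s t : Fin (n + 1) → X) = List.ofFn s ++ [t] := by
  rw [List.ofFn_succ']
  simp [Fin.snoc_castSucc, Fin.snoc_last, List.concat_eq_append]

lemma wmap_snoc {N n : ℕ} (F : Fin (N + 1) → ℝ → ℝ) (s : Fin n → Fin (N + 1))
    (t : Fin (N + 1)) : wmap F (Fin.snoc s t) = wmap F s ∘ F t := by
  rw [wmap_eq_Wl, wmap_eq_Wl, ofFn_snoc'' s t, Wl_append]
  ext x
  simp [Wl]

lemma ofFn_get_cast {X : Type*} (k : ℕ) (l : List X) (h : l.length = k) :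
    List.ofFn (fun i : Fin k => l.get (Fin.cast h.symm i)) = l := by
  subst h
  simpa using List.ofFn_get l

set_option maxHeartbeats 1600000 in
/-- If `f` is `α`-Hölder, `g` is `β`-Hölder on `K`, `0 < α, β ≤ 1`,
`∑_s r_s^{α+β} < 1`, and from some level `M` on `g` takes equal values at the two
endpoints `b_{(s,l)}, a_{(s,l+1)}` of every hole, then `(f,g)` is integrable. -/
theorem integrable_of_eventually_constant_on_holes
    {N : ℕ} (r c : Fin (N + 1) → ℝ)
    (hr0 : ∀ s, 0 < r s) (hr1 : ∀ s, r s < 1)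
    (a b : ℝ) (hab : a < b)
    (F : Fin (N + 1) → ℝ → ℝ) (hF : ∀ s x, F s x = r s * x + c s)
    (ha : F 0 a = a) (hb : F (Fin.last N) b = b)
    (hord : ∀ l : Fin N, F l.castSucc b ≤ F l.succ a)
    (f g : ℝ → ℝ) (α β : ℝ)
    (hα0 : 0 < α) (hα1 : α ≤ 1) (hβ0 : 0 < β) (hβ1 : β ≤ 1)
    (hf : ∃ C : ℝ, ∀ x ∈ ssSet F a b, ∀ y ∈ ssSet F a b, |f x - f y| ≤ C * |x - y| ^ α)
    (hg : ∃ C : ℝ, ∀ x ∈ ssSet F a b, ∀ y ∈ ssSet F a b, |g x - g y| ≤ C * |x - y| ^ β)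
    (hdim : ∑ s : Fin (N + 1), r s ^ (α + β) < 1)
    (hconst : ∃ M : ℕ, ∀ n : ℕ, M ≤ n → ∀ s : Fin n → Fin (N + 1), ∀ l : Fin N,
      g (wmap F s (F l.castSucc b)) = g (wmap F s (F l.succ a))) :
    ∃ L : ℝ, Tendsto (phiSeq F a b f g) atTop (nhds L) := by
  classical
  obtain ⟨Cf, hf⟩ := hf
  obtain ⟨Cg, hg⟩ := hg
  obtain ⟨M, hM⟩ := hconst
  set Cf' := max Cf 0 with hCf'
  set Cg' := max Cg 0 with hCg'
  have hCf0 : (0:ℝ) ≤ Cf' := le_max_right _ _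
  have hCg0 : (0:ℝ) ≤ Cg' := le_max_right _ _
  have hf' : ∀ x ∈ ssSet F a b, ∀ y ∈ ssSet F a b, |f x - f y| ≤ Cf' * |x - y| ^ α :=
    fun x hx y hy => (hf x hx y hy).trans
      (mul_le_mul_of_nonneg_right (le_max_left _ _) (Real.rpow_nonneg (abs_nonneg _) _))
  have hg' : ∀ x ∈ ssSet F a b, ∀ y ∈ ssSet F a b, |g x - g y| ≤ Cg' * |x - y| ^ β :=
    fun x hx y hy => (hg x hx y hy).trans
      (mul_le_mul_of_nonneg_right (le_max_left _ _) (Real.rpow_nonneg (abs_nonneg _) _))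
  -- monotonicity of each branch
  have hmono : ∀ s : Fin (N + 1), Monotone (F s) := by
    intro s x y hxy
    rw [hF, hF]
    have := hr0 s
    nlinarith
  have hFa : ∀ s : Fin (N + 1), a ≤ F s a := by
    intro s
    induction s using Fin.induction with
    | zero => rw [ha]
    | succ i ih => exact ih.trans ((hmono _ hab.le).trans (hord i))
  have hFb : ∀ s : Fin (N + 1), F s b ≤ b := by
    intro s
    induction s using Fin.reverseInduction with
    | last => rw [hb]
    | cast i ih => exact ((hord i).trans (hmono _ hab.le)).trans ih
  have hFIcc : ∀ s : Fin (N + 1), Set.MapsTo (F s) (Set.Icc a b) (Set.Icc a b) := by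
    intro s x hx
    exact ⟨(hFa s).trans (hmono s hx.1), (hmono s hx.2).trans (hFb s)⟩
  have hWIcc : ∀ l : List (Fin (N + 1)), Set.MapsTo (Wl F l) (Set.Icc a b) (Set.Icc a b) := by
    intro l
    induction l with
    | nil => exact fun x hx => hx
    | cons i l ih => exact (hFIcc i).comp ih
  -- affine displacement
  have hWsub : ∀ l : List (Fin (N + 1)), ∀ x y : ℝ,
      Wl F l x - Wl F l y = (l.map r).prod * (x - y) := by
    intro l
    induction l with
    | nil => intro x y; simp [Wl]
    | cons i l ih =>
      intro x y
      rw [Wl_cons]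
      simp only [Function.comp_apply, hF, List.map_cons, List.prod_cons]
      have h2 := ih x y
      linear_combination r i * h2
  have hprod_pos : ∀ l : List (Fin (N + 1)), 0 < (l.map r).prod := by
    intro l
    induction l with
    | nil => simp
    | cons i l ih => simpa using mul_pos (hr0 i) ih
  have hprod_le : ∀ l : List (Fin (N + 1)), (l.map r).prod ≤ 1 := by
    intro l
    induction l with
    | nil => simp
    | cons i l ih =>
      simp only [List.map_cons, List.prod_cons]
      calc r i * (l.map r).prod ≤ 1 * 1 :=
        mul_le_mul (hr1 i).le ih (hprod_pos l).le zero_le_one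
      _ = 1 := one_mul 1
  -- fixed points give membership in K
  have hfix : ∀ (z : Fin (N + 1)) (x : ℝ), F z x = x →
      ∀ k : ℕ, Wl F (List.replicate k z) x = x := by
    intro z x hz k
    induction k with
    | zero => rfl
    | succ k ih =>
      rw [List.replicate_succ, Wl_cons, Function.comp_apply, ih, hz]
  have hmem : ∀ (l : List (Fin (N + 1))) (x : ℝ) (z : Fin (N + 1)), F z x = x →
      x ∈ Set.Icc a b → Wl F l x ∈ ssSet F a b := by
    intro l x z hz hx
    rw [ssSet, Set.mem_iInter]
    intro m
    rw [Set.mem_iUnion]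
    set L := l ++ List.replicate (m + 1) z with hLdef
    have hlen : m + 1 ≤ L.length := by simp [hLdef]
    have hWx : Wl F L x = Wl F l x := by
      rw [hLdef, Wl_append, Function.comp_apply, hfix z x hz]
    have hl1 : (L.take (m + 1)).length = m + 1 := by
      rw [List.length_take]
      omega
    refine ⟨fun i => (L.take (m + 1)).get (Fin.cast hl1.symm i), ?_⟩
    rw [wmap_eq_Wl, ofFn_get_cast _ _ hl1]
    refine ⟨Wl F (L.drop (m + 1)) x, hWIcc _ hx, ?_⟩
    rw [← Function.comp_apply (f := Wl F (L.take (m+1))), ← Wl_append,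
      List.take_append_drop, hWx]
  have haK : ∀ {n : ℕ} (s : Fin n → Fin (N + 1)), wmap F s a ∈ ssSet F a b := by
    intro n s
    rw [wmap_eq_Wl]
    exact hmem _ a 0 ha ⟨le_refl a, hab.le⟩
  have hbK : ∀ {n : ℕ} (s : Fin n → Fin (N + 1)), wmap F s b ∈ ssSet F a b := by
    intro n s
    rw [wmap_eq_Wl]
    exact hmem _ b (Fin.last N) hb ⟨hab.le, le_refl b⟩
  -- constants
  have hba : (0:ℝ) < b - a := sub_pos.mpr hab
  set γ := α + β with hγdef
  have hγ0 : 0 < γ := add_pos hα0 hβ0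
  set ρ := ∑ t : Fin (N + 1), r t ^ γ with hρdef
  have hρ0 : 0 < ρ :=
    Finset.sum_pos (fun t _ => Real.rpow_pos_of_pos (hr0 t) γ) Finset.univ_nonempty
  set D := 2 * Cf' * Cg' * (b - a) ^ γ * (N + 1 : ℝ) with hDdef
  -- key estimate
  have key : ∀ n : ℕ, M ≤ n →
      |phiSeq F a b f g (n + 1) - phiSeq F a b f g n| ≤ D * ρ ^ n := by
    intro n hn
    -- reindex the (n+1)-sum
    have hre : phiSeq F a b f g (n + 1)
        = ∑ s : Fin n → Fin (N + 1), ∑ t : Fin (N + 1),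
            (f (wmap F (Fin.snoc s t) a) + f (wmap F (Fin.snoc s t) b)) *
              (g (wmap F (Fin.snoc s t) b) - g (wmap F (Fin.snoc s t) a)) := by
      rw [phiSeq, ← Equiv.sum_comp (Fin.snocEquiv (fun _ => Fin (N + 1)))
        (fun s : Fin (n + 1) → Fin (N + 1) =>
          (f (wmap F s a) + f (wmap F s b)) * (g (wmap F s b) - g (wmap F s a)))]
      rw [Fintype.sum_prod_type]
      rw [Finset.sum_comm]
      rfl
    -- telescoping identity for g on each cylinder
    have htel : ∀ s : Fin n → Fin (N + 1),
        g (wmap F s b) - g (wmap F s a)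
          = ∑ t : Fin (N + 1),
              (g (wmap F (Fin.snoc s t) b) - g (wmap F (Fin.snoc s t) a)) := by
      intro s
      set h : ℕ → ℝ := fun i =>
        if hi : i < N + 1 then g (wmap F s (F ⟨i, hi⟩ a)) else g (wmap F s b) with hhdef
      have h0 : h 0 = g (wmap F s a) := by
        have h00 : (⟨0, Nat.succ_pos N⟩ : Fin (N + 1)) = 0 := rfl
        simp only [hhdef, dif_pos (Nat.succ_pos N), h00, ha]
      have hNh : h (N + 1) = g (wmap F s b) := by
        simp only [hhdef, dif_neg (lt_irrefl (N + 1))]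
      have hstep : ∀ t : Fin (N + 1),
          h ((t : ℕ) + 1) - h (t : ℕ)
            = g (wmap F (Fin.snoc s t) b) - g (wmap F (Fin.snoc s t) a) := by
        intro t
        have hta : h (t : ℕ) = g (wmap F (Fin.snoc s t) a) := by
          have : h (t : ℕ) = g (wmap F s (F t a)) := by
            simp only [hhdef, dif_pos t.isLt, Fin.eta]
          rw [this, wmap_snoc]
          rfl
        have htb : h ((t : ℕ) + 1) = g (wmap F (Fin.snoc s t) b) := by
          rcases lt_or_ge (t : ℕ) N with hlt | hge
          · set l : Fin N := ⟨(t : ℕ), hlt⟩ with hldef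
            have h1 : ((t : ℕ) + 1) < N + 1 := Nat.succ_lt_succ hlt
            have h2 : (⟨(t : ℕ) + 1, h1⟩ : Fin (N + 1)) = l.succ := by
              apply Fin.ext; simp [hldef]
            have h3 : l.castSucc = t := by
              apply Fin.ext; simp [hldef]
            have : h ((t : ℕ) + 1) = g (wmap F s (F l.succ a)) := by
              simp only [hhdef, dif_pos h1, h2]
            rw [this, ← hM n hn s l, h3, wmap_snoc]
            rfl
          · have hteq : (t : ℕ) = N := le_antisymm (Nat.lt_succ_iff.mp t.isLt) hge
            have hlast : t = Fin.last N := by apply Fin.ext; simp [hteq]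
            have : h ((t : ℕ) + 1) = g (wmap F s b) := by
              rw [hteq]; exact hNh
            rw [this, hlast, wmap_snoc]
            simp only [Function.comp_apply, hb]
        rw [hta, htb]
      calc g (wmap F s b) - g (wmap F s a) = h (N + 1) - h 0 := by rw [h0, hNh]
        _ = ∑ i ∈ Finset.range (N + 1), (h (i + 1) - h i) :=
            (Finset.sum_range_sub h (N + 1)).symm
        _ = ∑ t : Fin (N + 1), (h ((t : ℕ) + 1) - h (t : ℕ)) :=
            (Fin.sum_univ_eq_sum_range (fun i => h (i + 1) - h i) (N + 1)).symm
        _ = _ := Finset.sum_congr rfl (fun t _ => hstep t)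
    -- the difference as a double sum
    have hdiff : phiSeq F a b f g (n + 1) - phiSeq F a b f g n
        = ∑ s : Fin n → Fin (N + 1), ∑ t : Fin (N + 1),
            ((f (wmap F (Fin.snoc s t) a) + f (wmap F (Fin.snoc s t) b))
              - (f (wmap F s a) + f (wmap F s b))) *
            (g (wmap F (Fin.snoc s t) b) - g (wmap F (Fin.snoc s t) a)) := by
      rw [hre]
      conv_lhs => rw [phiSeq]
      rw [← Finset.sum_sub_distrib]
      refine Finset.sum_congr rfl (fun s _ => ?_)
      rw [htel s, Finset.mul_sum, ← Finset.sum_sub_distrib]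
      refine Finset.sum_congr rfl (fun t _ => ?_)
      ring
    -- per-term bound
    have hterm : ∀ (s : Fin n → Fin (N + 1)) (t : Fin (N + 1)),
        |((f (wmap F (Fin.snoc s t) a) + f (wmap F (Fin.snoc s t) b))
            - (f (wmap F s a) + f (wmap F s b))) *
          (g (wmap F (Fin.snoc s t) b) - g (wmap F (Fin.snoc s t) a))|
          ≤ 2 * Cf' * Cg' * (b - a) ^ γ * ((List.ofFn s).map r).prod ^ γ := by
      intro s t
      set P := ((List.ofFn s).map r).prod with hPdef
      have hP0 : 0 < P := hprod_pos _
      have hPb0 : 0 < P * (b - a) := mul_pos hP0 hba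
      have hFta : F t a ∈ Set.Icc a b := hFIcc t ⟨le_refl a, hab.le⟩
      have hFtb : F t b ∈ Set.Icc a b := hFIcc t ⟨hab.le, le_refl b⟩
      -- distances
      have hda : |wmap F (Fin.snoc s t) a - wmap F s a| ≤ P * (b - a) := by
        rw [wmap_snoc, Function.comp_apply, wmap_eq_Wl, hWsub]
        rw [abs_mul, abs_of_pos hP0]
        apply mul_le_mul_of_nonneg_left _ hP0.le
        rw [abs_le]
        constructor <;> [linarith [hFta.1]; linarith [hFta.2, hFta.1]]
      have hdb : |wmap F (Fin.snoc s t) b - wmap F s b| ≤ P * (b - a) := by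
        rw [wmap_snoc, Function.comp_apply, wmap_eq_Wl, hWsub]
        rw [abs_mul, abs_of_pos hP0]
        apply mul_le_mul_of_nonneg_left _ hP0.le
        rw [abs_le]
        constructor <;> [linarith [hFtb.1]; linarith [hFtb.2]]
      have hdab : |wmap F (Fin.snoc s t) b - wmap F (Fin.snoc s t) a| ≤ P * (b - a) := by
        rw [wmap_eq_Wl, hWsub, ofFn_snoc'', List.map_append, List.prod_append]
        simp only [List.map_cons, List.map_nil, List.prod_cons, List.prod_nil, mul_one]
        rw [abs_mul, abs_of_pos (mul_pos hP0 (hr0 t)), abs_of_pos hba]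
        have : P * r t ≤ P := by nlinarith [hr0 t, hr1 t]
        nlinarith
      -- Hölder bounds
      have hfa : |f (wmap F (Fin.snoc s t) a) - f (wmap F s a)|
          ≤ Cf' * (P * (b - a)) ^ α := by
        refine (hf' _ (haK _) _ (haK _)).trans ?_
        exact mul_le_mul_of_nonneg_left
          (Real.rpow_le_rpow (abs_nonneg _) hda hα0.le) hCf0
      have hfb : |f (wmap F (Fin.snoc s t) b) - f (wmap F s b)|
          ≤ Cf' * (P * (b - a)) ^ α := by
        refine (hf' _ (hbK _) _ (hbK _)).trans ?_
        exact mul_le_mul_of_nonneg_left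
          (Real.rpow_le_rpow (abs_nonneg _) hdb hα0.le) hCf0
      have hgab : |g (wmap F (Fin.snoc s t) b) - g (wmap F (Fin.snoc s t) a)|
          ≤ Cg' * (P * (b - a)) ^ β := by
        refine (hg' _ (hbK _) _ (haK _)).trans ?_
        exact mul_le_mul_of_nonneg_left
          (Real.rpow_le_rpow (abs_nonneg _) hdab hβ0.le) hCg0
      have hsum : |(f (wmap F (Fin.snoc s t) a) + f (wmap F (Fin.snoc s t) b))
            - (f (wmap F s a) + f (wmap F s b))|
          ≤ 2 * (Cf' * (P * (b - a)) ^ α) := by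
        calc |(f (wmap F (Fin.snoc s t) a) + f (wmap F (Fin.snoc s t) b))
              - (f (wmap F s a) + f (wmap F s b))|
            = |(f (wmap F (Fin.snoc s t) a) - f (wmap F s a))
              + (f (wmap F (Fin.snoc s t) b) - f (wmap F s b))| := by ring_nf
          _ ≤ |f (wmap F (Fin.snoc s t) a) - f (wmap F s a)|
              + |f (wmap F (Fin.snoc s t) b) - f (wmap F s b)| := abs_add_le _ _
          _ ≤ 2 * (Cf' * (P * (b - a)) ^ α) := by linarith
      rw [abs_mul]
      calc |(f (wmap F (Fin.snoc s t) a) + f (wmap F (Fin.snoc s t) b))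
            - (f (wmap F s a) + f (wmap F s b))| *
          |g (wmap F (Fin.snoc s t) b) - g (wmap F (Fin.snoc s t) a)|
          ≤ (2 * (Cf' * (P * (b - a)) ^ α)) * (Cg' * (P * (b - a)) ^ β) := by
            apply mul_le_mul hsum hgab (abs_nonneg _)
            positivity
        _ = 2 * Cf' * Cg' * ((P * (b - a)) ^ α * (P * (b - a)) ^ β) := by ring
        _ = 2 * Cf' * Cg' * (P * (b - a)) ^ γ := by
            rw [← Real.rpow_add hPb0, hγdef]
        _ = 2 * Cf' * Cg' * ((b - a) ^ γ * P ^ γ) := by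
            rw [Real.mul_rpow hP0.le hba.le]; ring_nf
        _ = 2 * Cf' * Cg' * (b - a) ^ γ * P ^ γ := by ring
    -- sum up
    have hsum_rho : ∑ s : Fin n → Fin (N + 1), ((List.ofFn s).map r).prod ^ γ = ρ ^ n := by
      have hPs : ∀ s : Fin n → Fin (N + 1),
          ((List.ofFn s).map r).prod ^ γ = ∏ i : Fin n, r (s i) ^ γ := by
        intro s
        rw [List.map_ofFn, List.prod_ofFn]
        exact (Real.finset_prod_rpow _ _ (fun i _ => (hr0 (s i)).le) _).symm
      rw [Finset.sum_congr rfl (fun s _ => hPs s)]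
      calc ∑ s : Fin n → Fin (N + 1), ∏ i : Fin n, r (s i) ^ γ
          = ∑ s ∈ Fintype.piFinset (fun _ : Fin n => (Finset.univ : Finset (Fin (N + 1)))),
              ∏ i : Fin n, r (s i) ^ γ := by rw [Fintype.piFinset_univ]
        _ = ∏ _i : Fin n, ∑ t : Fin (N + 1), r t ^ γ :=
            (Finset.prod_univ_sum (fun _ : Fin n => (Finset.univ : Finset (Fin (N + 1))))
              (fun _ t => r t ^ γ)).symm
        _ = ρ ^ n := by
            rw [Finset.prod_const, Finset.card_univ, Fintype.card_fin]
    calc |phiSeq F a b f g (n + 1) - phiSeq F a b f g n|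
        ≤ ∑ s : Fin n → Fin (N + 1), ∑ t : Fin (N + 1),
            |((f (wmap F (Fin.snoc s t) a) + f (wmap F (Fin.snoc s t) b))
              - (f (wmap F s a) + f (wmap F s b))) *
            (g (wmap F (Fin.snoc s t) b) - g (wmap F (Fin.snoc s t) a))| := by
          rw [hdiff]
          exact (Finset.abs_sum_le_sum_abs _ _).trans
            (Finset.sum_le_sum (fun s _ => Finset.abs_sum_le_sum_abs _ _))
      _ ≤ ∑ s : Fin n → Fin (N + 1), ∑ _t : Fin (N + 1),
            2 * Cf' * Cg' * (b - a) ^ γ * ((List.ofFn s).map r).prod ^ γ :=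
          Finset.sum_le_sum (fun s _ => Finset.sum_le_sum (fun t _ => hterm s t))
      _ = (2 * Cf' * Cg' * (b - a) ^ γ * (N + 1 : ℝ)) *
            ∑ s : Fin n → Fin (N + 1), ((List.ofFn s).map r).prod ^ γ := by
          rw [Finset.mul_sum]
          refine Finset.sum_congr rfl fun s _ => ?_
          rw [Finset.sum_const, Finset.card_univ, Fintype.card_fin, nsmul_eq_mul]
          push_cast
          ring
      _ = D * ρ ^ n := by rw [hsum_rho]
  -- conclude via Cauchy
  have hcau : CauchySeq (fun n => phiSeq F a b f g (n + M)) := by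
    apply cauchySeq_of_le_geometric ρ (D * ρ ^ M) hdim
    intro n
    rw [Real.dist_eq]
    have hk := key (n + M) (Nat.le_add_left M n)
    have heq : n + 1 + M = n + M + 1 := by omega
    rw [heq, abs_sub_comm]
    calc |phiSeq F a b f g (n + M + 1) - phiSeq F a b f g (n + M)|
        ≤ D * ρ ^ (n + M) := hk
      _ = D * ρ ^ M * ρ ^ n := by rw [pow_add]; ring
  obtain ⟨L, hL⟩ := cauchySeq_tendsto_of_complete hcau
  exact ⟨L, (tendsto_add_atTop_iff_nat M).mp hL⟩
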